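/- Let x < y be real numbers, let ω ∈ ℂ, and set M := max_{t ∈ [x,y]} |u(t)|. Assume that Re(conj(ω)·u(t)) ≥ 0 for all t ∈ [x, y]. Then Re(conj(ω)·∫_x^y (y − s)·(V(s) − E)·u(s) ds) ≥ −|ω|·M·(y − x)·(y − x + 1)·C₂. -/

import Mathlib

open MeasureTheory Set

/-- Lemma 3.1 (integral remainder estimate): under the sign condition
`Re(conj ω · u(t)) ≥ 0` on `[x, y]`,
`Re(conj ω · ∫_x^y (y - s)(V(s) - E) u(s) ds) ≥ -|ω| M (y-x)(y-x+1) C₂`. -/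
theorem stmt_1
    (V : ℝ → ℝ) (hVmeas : Measurable V)
    (hVloc : LocallyIntegrable V volume)
    (C₁ : ℝ)
    (hC₁ : IsLUB (Set.range fun x : ℝ => ∫ y in x..x + 1, max (-V y) 0) C₁)
    (E : ℂ) (u u' : ℝ → ℂ)
    (hu : ∀ x : ℝ, HasDerivAt u (u' x) x)
    (heq : ∀ a b : ℝ, a ≤ b →
      u' b - u' a = ∫ t in a..b, ((V t : ℂ) - E) * u t)
    (C₂ : ℝ) (hC₂ : C₂ = C₁ + ‖E‖)
    (x y : ℝ) (hxy : x < y) (ω : ℂ)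
    (M : ℝ) (hM : IsGreatest ((fun t => ‖(u t)‖) '' Icc x y) M)
    (hpos : ∀ t ∈ Icc x y, 0 ≤ (starRingEnd ℂ ω * u t).re) :
    -(‖ω‖ * M * (y - x) * (y - x + 1) * C₂)
      ≤ (starRingEnd ℂ ω * ∫ s in x..y, ((y : ℂ) - s) * ((V s : ℂ) - E) * u s).re := by
  have hxy' : x ≤ y := hxy.le
  have hVm_nonneg : ∀ s : ℝ, 0 ≤ max (-V s) 0 := fun s => le_max_right _ _
  have hC₁' : ∀ a : ℝ, ∫ s in a..a + 1, max (-V s) 0 ≤ C₁ := fun a => hC₁.1 ⟨a, rfl⟩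
  have hC₁0 : 0 ≤ C₁ :=
    le_trans (intervalIntegral.integral_nonneg (by norm_num) fun t _ => hVm_nonneg t) (hC₁' 0)
  -- interval integrability of V₋
  have hVmInt : ∀ a b : ℝ, IntervalIntegrable (fun s => max (-V s) 0) volume a b := by
    intro a b
    apply IntegrableOn.intervalIntegrable
    refine MeasureTheory.Integrable.mono (hVloc.integrableOn_isCompact isCompact_uIcc)
      ((hVmeas.neg.max measurable_const).aestronglyMeasurable) ?_
    refine Filter.Eventually.of_forall fun t => ?_
    simp only [Real.norm_eq_abs]
    rw [abs_of_nonneg (hVm_nonneg t)]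
    exact max_le (neg_le_abs (V t)) (abs_nonneg _)
  -- continuity of u
  have hu_cont : Continuous u := continuous_iff_continuousAt.mpr fun t => (hu t).continuousAt
  -- facts about M
  obtain ⟨t0, ht0, hMt0⟩ := hM.1
  have hM0 : 0 ≤ M := hMt0 ▸ norm_nonneg _
  have hMb : ∀ t ∈ Icc x y, ‖(u t)‖ ≤ M := fun t ht => hM.2 ⟨t, ht, rfl⟩
  -- integrability of the main integrand
  have hVCInt : IntervalIntegrable (fun s => ((V s : ℂ) - E)) volume x y :=
    (IntegrableOn.intervalIntegrable
      (show IntegrableOn (fun s => ((V s : ℝ) : ℂ)) (uIcc x y) volume from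
        (hVloc.integrableOn_isCompact isCompact_uIcc).ofReal)).sub intervalIntegrable_const
  have hfInt : IntervalIntegrable (fun s => ((y : ℂ) - s) * ((V s : ℂ) - E) * u s) volume x y := by
    have h1 := (hVCInt.mul_continuousOn hu_cont.continuousOn).continuousOn_mul
      ((continuous_const.sub Complex.continuous_ofReal).continuousOn
        (s := uIcc x y) (f := fun s : ℝ => (y : ℂ) - (s : ℂ)))
    simpa [mul_assoc] using h1
  -- re commutes with the integral
  have hmain : (starRingEnd ℂ ω * ∫ s in x..y, ((y : ℂ) - s) * ((V s : ℂ) - E) * u s).re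
      = ∫ s in x..y, (starRingEnd ℂ ω * (((y : ℂ) - s) * ((V s : ℂ) - E) * u s)).re := by
    rw [← intervalIntegral.integral_const_mul]
    have := ContinuousLinearMap.intervalIntegral_comp_comm Complex.reCLM
      (hfInt.const_mul (starRingEnd ℂ ω))
    simpa using this.symm
  -- pointwise lower bound
  have key_pt : ∀ s ∈ Icc x y,
      -(‖ω‖ * M * (y - x) * (max (-V s) 0 + ‖E‖))
        ≤ (starRingEnd ℂ ω * (((y : ℂ) - s) * ((V s : ℂ) - E) * u s)).re := by
    intro s hs
    have hys : (0:ℝ) ≤ y - s := sub_nonneg.2 hs.2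
    have hyx : y - s ≤ y - x := by linarith [hs.1]
    have hr : V s = max (V s) 0 - max (-V s) 0 := by
      have h := max_zero_sub_max_neg_zero_eq_self (V s)
      linarith
    have hrC : ((V s : ℝ) : ℂ) = ((max (V s) 0 : ℝ) : ℂ) - ((max (-V s) 0 : ℝ) : ℂ) := by
      exact_mod_cast congrArg (fun r : ℝ => (r : ℂ)) hr
    have hdecomp : starRingEnd ℂ ω * (((y : ℂ) - s) * ((V s : ℂ) - E) * u s)
        = (((y - s) * max (V s) 0 : ℝ) : ℂ) * (starRingEnd ℂ ω * u s)
          + starRingEnd ℂ ω * (((y : ℂ) - s) * ((((-(max (-V s) 0)) : ℝ) : ℂ) - E) * u s) := by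
      rw [hrC]; push_cast; ring
    rw [hdecomp, Complex.add_re, Complex.re_ofReal_mul]
    set z := starRingEnd ℂ ω * (((y : ℂ) - s) * ((((-(max (-V s) 0)) : ℝ) : ℂ) - E) * u s) with hz
    have h1 : 0 ≤ (y - s) * max (V s) 0 * (starRingEnd ℂ ω * u s).re :=
      mul_nonneg (mul_nonneg hys (le_max_right _ _)) (hpos s hs)
    have habs : ‖z‖ ≤ ‖ω‖ * M * (y - x) * (max (-V s) 0 + ‖E‖) := by
      rw [hz, norm_mul, norm_mul, norm_mul, Complex.norm_conj]
      have e1 : ‖((y : ℂ) - (s : ℂ))‖ = y - s := by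
        rw [← Complex.ofReal_sub, Complex.norm_real, Real.norm_eq_abs, abs_of_nonneg hys]
      have e2 : ‖((((-(max (-V s) 0)) : ℝ) : ℂ) - E)‖
          ≤ max (-V s) 0 + ‖E‖ := by
        calc ‖((((-(max (-V s) 0)) : ℝ) : ℂ) - E)‖
            ≤ ‖(((-(max (-V s) 0) : ℝ)) : ℂ)‖ + ‖E‖ := by
              simpa [sub_eq_add_neg] using
                norm_add_le ((((-(max (-V s) 0)) : ℝ)) : ℂ) (-E)
          _ = max (-V s) 0 + ‖E‖ := by
              rw [Complex.norm_real, Real.norm_eq_abs, abs_neg, abs_of_nonneg (hVm_nonneg s)]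
      rw [e1]
      have hVmE : 0 ≤ max (-V s) 0 + ‖E‖ :=
        add_nonneg (hVm_nonneg s) (norm_nonneg E)
      have hprod : 0 ≤ ‖ω‖ * (y - x) * (max (-V s) 0 + ‖E‖) :=
        mul_nonneg (mul_nonneg (norm_nonneg _) (by linarith)) hVmE
      have hbound : ‖ω‖ * (y - s) * ‖((((-(max (-V s) 0)) : ℝ) : ℂ) - E)‖
            * ‖(u s)‖
          ≤ ‖ω‖ * (y - x) * (max (-V s) 0 + ‖E‖) * M := by
        gcongr <;> first
          | exact norm_nonneg _
          | exact hVmE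
          | exact hprod
          | exact mul_nonneg (norm_nonneg _) (by linarith : (0:ℝ) ≤ y - x)
          | exact hyx
          | exact e2
          | exact hMb s hs
          | positivity
          | linarith
      calc ‖ω‖ * ((y - s) * ‖((((-(max (-V s) 0)) : ℝ) : ℂ) - E)‖
              * ‖(u s)‖)
          = ‖ω‖ * (y - s) * ‖((((-(max (-V s) 0)) : ℝ) : ℂ) - E)‖
              * ‖(u s)‖ := by ring
        _ ≤ ‖ω‖ * (y - x) * (max (-V s) 0 + ‖E‖) * M := hbound
        _ = ‖ω‖ * M * (y - x) * (max (-V s) 0 + ‖E‖) := by ring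
    have hre : -(‖z‖) ≤ z.re := by
      have := Complex.abs_re_le_norm z
      have := neg_abs_le z.re
      linarith [abs_le.1 (Complex.abs_re_le_norm z)]
    linarith
  -- integrability of the bounding functions
  have hhInt : IntervalIntegrable
      (fun s => -(‖ω‖ * M * (y - x) * (max (-V s) 0 + ‖E‖))) volume x y :=
    (((hVmInt x y).add intervalIntegrable_const).const_mul _).neg
  have hReInt : IntervalIntegrable
      (fun s => (starRingEnd ℂ ω * (((y : ℂ) - s) * ((V s : ℂ) - E) * u s)).re) volume x y := by
    have h := hfInt.const_mul (starRingEnd ℂ ω)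
    exact ⟨h.1.re, h.2.re⟩
  -- bound on the integral of V₋
  have hstep : ∀ n : ℕ, ∫ s in x..(x + n), max (-V s) 0 ≤ n * C₁ := by
    intro n
    induction n with
    | zero => simp
    | succ n ih =>
      have hadj := intervalIntegral.integral_add_adjacent_intervals
        (hVmInt x (x + n)) (hVmInt (x + n) (x + n + 1))
      have hle := hC₁' (x + n)
      have he : (x + ((n : ℕ) + 1 : ℕ) : ℝ) = x + (n : ℝ) + 1 := by push_cast; ring
      rw [he, ← hadj]
      push_cast
      linarith
  set n : ℕ := ⌈y - x⌉₊ with hn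
  have hyn : y ≤ x + n := by
    have := Nat.le_ceil (y - x)
    simp only [← hn] at this
    linarith
  have hJ : (∫ s in x..y, max (-V s) 0) ≤ (y - x + 1) * C₁ := by
    have hadj := intervalIntegral.integral_add_adjacent_intervals
      (hVmInt x y) (hVmInt y (x + n))
    have h2 : 0 ≤ ∫ s in y..(x + n : ℝ), max (-V s) 0 :=
      intervalIntegral.integral_nonneg hyn fun t _ => hVm_nonneg t
    have h3 : (∫ s in x..y, max (-V s) 0) ≤ ∫ s in x..(x + n : ℝ), max (-V s) 0 := by
      linarith [hadj]
    have h4 : (n : ℝ) * C₁ ≤ (y - x + 1) * C₁ := by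
      have : (n : ℝ) ≤ y - x + 1 := (Nat.ceil_lt_add_one (by linarith : (0:ℝ) ≤ y - x)).le
      exact mul_le_mul_of_nonneg_right this hC₁0
    linarith [hstep n]
  -- put everything together
  rw [hmain]
  have hmono := intervalIntegral.integral_mono_on hxy' hhInt hReInt key_pt
  have hcomp : (∫ s in x..y,
        -(‖ω‖ * M * (y - x) * (max (-V s) 0 + ‖E‖)))
      = -(‖ω‖ * M * (y - x)
          * ((∫ s in x..y, max (-V s) 0) + (y - x) * ‖E‖)) := by
    rw [intervalIntegral.integral_neg, intervalIntegral.integral_const_mul,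
      intervalIntegral.integral_add (hVmInt x y) intervalIntegrable_const,
      intervalIntegral.integral_const]
    simp [smul_eq_mul]
  rw [hcomp] at hmono
  have hP : 0 ≤ ‖ω‖ * M * (y - x) :=
    mul_nonneg (mul_nonneg (norm_nonneg _) hM0) (by linarith)
  have hq : (∫ s in x..y, max (-V s) 0) + (y - x) * ‖E‖ ≤ (y - x + 1) * C₂ := by
    rw [hC₂]
    nlinarith [norm_nonneg E]
  have hfin : ‖ω‖ * M * (y - x)
        * ((∫ s in x..y, max (-V s) 0) + (y - x) * ‖E‖)
      ≤ ‖ω‖ * M * (y - x) * (y - x + 1) * C₂ := by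
    calc ‖ω‖ * M * (y - x)
          * ((∫ s in x..y, max (-V s) 0) + (y - x) * ‖E‖)
        ≤ ‖ω‖ * M * (y - x) * ((y - x + 1) * C₂) :=
          mul_le_mul_of_nonneg_left hq hP
      _ = ‖ω‖ * M * (y - x) * (y - x + 1) * C₂ := by ring
  linarith
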